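/- arXiv:2006.16015 — 5 statements merged into one kernel-verified Lean document; each statement's English description precedes it below -/
import Mathlib

section
/- For any nonnegative real-valued random variable X with E[X] > 0 and finite second moment, and with b := E[X²]/E[X]² < ∞, it holds that log(E[X]) ≤ min over a > b of ( a·E[log(1 + aX)] / (1 − √(b/a)) − log(a) ). -/
open MeasureTheory Real

set_option maxHeartbeats 2000000 in
/-- Reverse Jensen inequality: for a nonnegative random variable `X` with `E[X] > 0`
and finite second moment, with `b = E[X²]/E[X]²`, for every `a > b` we have
`log (E[X]) ≤ a * E[log (1 + a X)] / (1 - √(b/a)) - log a`. -/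
theorem reverse_jensen {Ω : Type*} [MeasurableSpace Ω] (μ : Measure Ω)
    [IsProbabilityMeasure μ] (X : Ω → ℝ) (hXnn : ∀ ω, 0 ≤ X ω) (hXm : Measurable X)
    (hX1 : Integrable X μ) (hX2 : Integrable (fun ω => X ω ^ 2) μ)
    (hpos : 0 < ∫ ω, X ω ∂μ) (b : ℝ)
    (hb : b = (∫ ω, X ω ^ 2 ∂μ) / (∫ ω, X ω ∂μ) ^ 2) :
    ∀ a : ℝ, b < a → Integrable (fun ω => Real.log (1 + a * X ω)) μ →
      Real.log (∫ ω, X ω ∂μ)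
        ≤ a * (∫ ω, Real.log (1 + a * X ω) ∂μ) / (1 - Real.sqrt (b / a))
          - Real.log a := by
  intro a ha hInt
  set m : ℝ := ∫ ω, X ω ∂μ with hm
  have hm0 : 0 < m := hpos
  clear_value m
  -- second moment ≥ m²
  have hvar : m ^ 2 ≤ ∫ ω, X ω ^ 2 ∂μ := by
    have h1 : (0:ℝ) ≤ ∫ ω, (X ω - m) ^ 2 ∂μ := integral_nonneg fun ω => sq_nonneg _
    have ha' : Integrable (fun ω => X ω ^ 2 - 2 * m * X ω) μ :=
      hX2.sub (hX1.const_mul (2 * m))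
    have h2 : ∫ ω, (X ω - m) ^ 2 ∂μ = (∫ ω, X ω ^ 2 ∂μ) - m ^ 2 := by
      have hfe : (fun ω => (X ω - m) ^ 2) =
          fun ω => (X ω ^ 2 - 2 * m * X ω) + m ^ 2 := by
        funext ω; ring
      rw [hfe, integral_add ha' (integrable_const _),
        integral_sub hX2 (hX1.const_mul (2 * m)), integral_const_mul, integral_const]
      simp only [measure_univ, probReal_univ, ENNReal.toReal_one, smul_eq_mul, one_mul, ← hm]
      ring
    linarith
  have hb1 : (1:ℝ) ≤ b := by
    rw [hb, le_div_iff₀ (by positivity)]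
    linarith
  have ha0 : (0:ℝ) < a := by linarith
  have hba : b / a < 1 := (div_lt_one ha0).2 ha
  have hba0 : 0 < b / a := by positivity
  set θ : ℝ := Real.sqrt (b / a) with hθdef
  have hθ1 : θ < 1 := by
    rw [hθdef, show (1:ℝ) = Real.sqrt 1 by simp]
    exact Real.sqrt_lt_sqrt (le_of_lt hba0) hba
  have hθ0 : 0 < θ := Real.sqrt_pos.2 hba0
  have hθsq : θ ^ 2 = b / a := Real.sq_sqrt (le_of_lt hba0)
  have hden : 0 < 1 - θ := by linarith
  clear_value θ
  set I : ℝ := ∫ ω, Real.log (1 + a * X ω) ∂μ with hI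
  have hInonneg : 0 ≤ I :=
    integral_nonneg fun ω => Real.log_nonneg (by nlinarith [hXnn ω])
  clear_value I
  -- the key inequality
  have key : (1 - θ) * Real.log (a * m) ≤ a * I := by
    by_cases hcase : Real.log (a * m) ≤ 0
    · nlinarith [mul_nonpos_of_nonneg_of_nonpos (le_of_lt hden) hcase,
        mul_nonneg (le_of_lt ha0) hInonneg]
    push_neg at hcase
    set c : ℝ := 2 * b * m with hc
    have hc0 : 0 < c := by nlinarith
    have hac0 : 0 < 1 + a * c := by nlinarith [mul_pos ha0 hc0]
    set L : ℝ := Real.log (1 + a * c) with hL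
    have hL0 : 0 ≤ L := Real.log_nonneg (by nlinarith [mul_pos ha0 hc0])
    have h2 : Real.log (a * m) ≤ L := by
      rw [hL]
      apply Real.log_le_log (by positivity)
      nlinarith [mul_nonneg (mul_nonneg (le_of_lt ha0) (le_of_lt hm0))
        (show (0:ℝ) ≤ 2 * b - 1 by linarith)]
    have hcomp : L / c * m - L / c ^ 2 * (b * m ^ 2) = L / (4 * b) := by
      rw [hc]; field_simp; ring
    clear_value L
    clear_value c
    -- pointwise lower bound on log (1 + a x)
    have hpt : ∀ ω, L / c * X ω - L / c ^ 2 * X ω ^ 2 ≤ Real.log (1 + a * X ω) := by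
      intro ω
      have hx0 : 0 ≤ X ω := hXnn ω
      set x : ℝ := X ω with hx
      clear_value x
      have hax0 : 0 < 1 + a * x := by nlinarith
      have heq : L / c * x - L / c ^ 2 * x ^ 2 = L * (c * x - x ^ 2) / c ^ 2 := by
        field_simp
      by_cases hxc : x ≤ c
      · -- concavity chord via Bernoulli
        have ht0 : 0 ≤ x / c := by positivity
        have ht1 : x / c ≤ 1 := (div_le_one hc0).2 hxc
        have hber : (1 + a * c) ^ (x / c) ≤ 1 + (x / c) * (a * c) :=
          rpow_one_add_le_one_add_mul_self (by nlinarith [mul_pos ha0 hc0]) ht0 ht1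
        have h1 : 1 + (x / c) * (a * c) = 1 + a * x := by
          field_simp
        have h2' : Real.log ((1 + a * c) ^ (x / c)) ≤ Real.log (1 + a * x) := by
          apply Real.log_le_log (Real.rpow_pos_of_pos hac0 _)
          rw [← h1]; exact hber
        rw [Real.log_rpow hac0, ← hL] at h2'
        have h3 : L * (c * x - x ^ 2) / c ^ 2 ≤ x / c * L := by
          have hre : x / c * L = L * (c * x) / c ^ 2 := by field_simp
          rw [hre, div_le_div_iff₀ (by positivity : (0:ℝ) < c ^ 2) (by positivity : (0:ℝ) < c ^ 2)]
          nlinarith [mul_nonneg (mul_nonneg hL0 (sq_nonneg x)) (sq_nonneg c)]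
        calc L / c * x - L / c ^ 2 * x ^ 2 = L * (c * x - x ^ 2) / c ^ 2 := heq
          _ ≤ x / c * L := h3
          _ ≤ Real.log (1 + a * x) := h2'
      · push_neg at hxc
        have h2' : L ≤ Real.log (1 + a * x) := by
          rw [hL]
          apply Real.log_le_log hac0
          nlinarith
        have h3 : L * (c * x - x ^ 2) / c ^ 2 ≤ L := by
          rw [div_le_iff₀ (by positivity : (0:ℝ) < c ^ 2)]
          nlinarith [mul_nonneg hL0 (sq_nonneg (x - c)),
            mul_nonneg (mul_nonneg hL0 (le_of_lt hc0)) hx0]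
        calc L / c * x - L / c ^ 2 * x ^ 2 = L * (c * x - x ^ 2) / c ^ 2 := heq
          _ ≤ L := h3
          _ ≤ Real.log (1 + a * x) := h2'
    -- integrate the pointwise bound
    have hgint : Integrable (fun ω => L / c * X ω - L / c ^ 2 * X ω ^ 2) μ :=
      (hX1.const_mul _).sub (hX2.const_mul _)
    have hIlow : L / c * m - L / c ^ 2 * (∫ ω, X ω ^ 2 ∂μ) ≤ I := by
      have hmono := integral_mono hgint hInt hpt
      rwa [integral_sub (hX1.const_mul _) (hX2.const_mul _),
        integral_const_mul, integral_const_mul, ← hm, ← hI] at hmono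
    have hXX : (∫ ω, X ω ^ 2 ∂μ) = b * m ^ 2 := by
      rw [hb]; field_simp
    have hIlow' : L / (4 * b) ≤ I := by
      rw [hXX, hcomp] at hIlow
      exact hIlow
    -- the algebraic inequality 1 - θ ≤ a / (4 b)
    have hbθ : b = a * θ ^ 2 := by
      rw [hθsq]; field_simp
    have h3 : 1 - θ ≤ a / (4 * b) := by
      rw [le_div_iff₀ (by linarith : (0:ℝ) < 4 * b)]
      nlinarith [mul_nonneg (mul_nonneg (le_of_lt ha0) (sq_nonneg (θ - 2 / 3)))
        (show (0:ℝ) ≤ 4 * θ + 4 / 3 by linarith)]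
    calc (1 - θ) * Real.log (a * m)
        ≤ (a / (4 * b)) * L :=
          mul_le_mul h3 h2 (le_of_lt hcase) (by positivity)
      _ = a * (L / (4 * b)) := by ring
      _ ≤ a * I := mul_le_mul_of_nonneg_left hIlow' (le_of_lt ha0)
  -- conclude
  have h4 : Real.log (a * m) ≤ a * I / (1 - θ) := by
    rw [le_div_iff₀ hden]
    linarith [key]
  rw [Real.log_mul (ne_of_gt ha0) (ne_of_gt hm0)] at h4
  linarith
end

section
/- Let P and Q be probability measures with P absolutely continuous with respect to Q, and let f be a bounded measurable function. Then E_P[f] − log E_Q[e^f] ≤ D_KL(P‖Q) (Donsker-Varadhan lower bound). -/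
open MeasureTheory Real

lemma integral_llr_nonneg' {α : Type*} [MeasurableSpace α]
    (P ν : Measure α) [IsProbabilityMeasure P] [IsProbabilityMeasure ν]
    (hPν : P ≪ ν) (h_int : Integrable (llr P ν) P) :
    0 ≤ ∫ x, llr P ν x ∂P := by
  have h_int_rn : Integrable (fun x ↦ (ν.rnDeriv P x).toReal) P :=
    Measure.integrable_toReal_rnDeriv
  have h_le : ∫ x, - llr P ν x ∂P ≤ ∫ x, ((ν.rnDeriv P x).toReal - 1) ∂P := by
    refine integral_mono_ae h_int.neg (h_int_rn.sub (integrable_const 1)) ?_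
    filter_upwards [neg_llr hPν, Measure.rnDeriv_pos' hPν,
      Measure.rnDeriv_lt_top ν P] with x hx hx_pos hx_lt
    rw [Pi.neg_apply] at hx
    rw [hx, llr]
    exact log_le_sub_one_of_pos (ENNReal.toReal_pos hx_pos.ne' hx_lt.ne)
  have h2 : ∫ x, ((ν.rnDeriv P x).toReal - 1) ∂P ≤ 0 := by
    rw [integral_sub h_int_rn (integrable_const 1), integral_const]
    simp only [measure_univ, ENNReal.toReal_one, smul_eq_mul, one_mul]
    have := Measure.setIntegral_toReal_rnDeriv_le (μ := ν) (ν := P)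
      (s := Set.univ) (measure_ne_top ν Set.univ)
    rw [setIntegral_univ] at this
    simpa using this
  have := h_le.trans h2
  rwa [integral_neg, neg_nonpos] at this

/-- Donsker–Varadhan lower bound: `E_P[f] - log E_Q[e^f] ≤ D_KL(P‖Q)`. -/
theorem donsker_varadhan_bound {α : Type*} [MeasurableSpace α]
    (P Q : Measure α) [IsProbabilityMeasure P] [IsProbabilityMeasure Q]
    (hPQ : P ≪ Q) (f : α → ℝ) (hf : Measurable f) (C : ℝ) (hC : ∀ x, |f x| ≤ C)
    (hkl : Integrable (fun x => Real.log ((P.rnDeriv Q x).toReal)) P) :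
    (∫ x, f x ∂P) - Real.log (∫ x, Real.exp (f x) ∂Q)
      ≤ ∫ x, Real.log ((P.rnDeriv Q x).toReal) ∂P := by
  have hfP : Integrable f P := by
    refine Integrable.mono' (integrable_const C) hf.aestronglyMeasurable ?_
    exact Filter.Eventually.of_forall fun x ↦ hC x
  have hexpQ : Integrable (fun x ↦ exp (f x)) Q := by
    refine Integrable.mono' (integrable_const (exp C)) (hf.exp).aestronglyMeasurable ?_
    refine Filter.Eventually.of_forall fun x ↦ ?_
    rw [norm_eq_abs, abs_of_pos (exp_pos _)]
    exact exp_le_exp.mpr ((abs_le.mp (hC x)).2)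
  have hkl' : Integrable (llr P Q) P := hkl
  have hν : IsProbabilityMeasure (Q.tilted f) := isProbabilityMeasure_tilted hexpQ
  have hPν : P ≪ Q.tilted f := hPQ.trans (absolutelyContinuous_tilted hexpQ)
  have h_int : Integrable (llr P (Q.tilted f)) P :=
    integrable_llr_tilted_right hPQ hfP hkl' hexpQ
  have h_eq := integral_llr_tilted_right hPQ hfP hexpQ hkl'
  have h0 := integral_llr_nonneg' P (Q.tilted f) hPν h_int
  rw [h_eq] at h0
  have : ∫ x, llr P Q x ∂P = ∫ x, Real.log ((P.rnDeriv Q x).toReal) ∂P := rfl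
  linarith [this ▸ h0]
end

section
/- Let P and Q be probability measures with P ≪ Q and finite KL divergence, and let f be a bounded measurable function. Then E_P[f] − e^{-1}·E_Q[e^f] ≤ D_KL(P‖Q) (NWJ/Nguyen-Wainwright-Jordan lower bound). -/
open MeasureTheory Real

lemma young_aux (t u : ℝ) (ht : 0 ≤ t) :
    t * u - (Real.exp 1)⁻¹ * Real.exp u ≤ t * Real.log t := by
  rcases eq_or_lt_of_le ht with h | h
  · simp [← h]
    positivity
  · have key : u - Real.log t ≤ Real.exp u / t * (Real.exp 1)⁻¹ := by
      have h1 : (u - Real.log t - 1) + 1 ≤ Real.exp (u - Real.log t - 1) :=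
        Real.add_one_le_exp _
      have h2 : Real.exp (u - Real.log t - 1) = Real.exp u / t * (Real.exp 1)⁻¹ := by
        rw [Real.exp_sub, Real.exp_sub, Real.exp_log h, div_eq_mul_inv (rexp u / t)]
      linarith
    have := mul_le_mul_of_nonneg_left key ht
    rw [mul_sub] at this
    have ht' : t * (Real.exp u / t * (Real.exp 1)⁻¹) = (Real.exp 1)⁻¹ * Real.exp u := by
      field_simp
    linarith [ht' ▸ this]

/-- NWJ (Nguyen–Wainwright–Jordan) lower bound:
`E_P[f] - e⁻¹ E_Q[e^f] ≤ D_KL(P‖Q)`. -/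
theorem nwj_bound {α : Type*} [MeasurableSpace α]
    (P Q : Measure α) [IsProbabilityMeasure P] [IsProbabilityMeasure Q]
    (hPQ : P ≪ Q) (f : α → ℝ) (hf : Measurable f) (C : ℝ) (hC : ∀ x, |f x| ≤ C)
    (hkl : Integrable (fun x => Real.log ((P.rnDeriv Q x).toReal)) P) :
    (∫ x, f x ∂P) - (Real.exp 1)⁻¹ * (∫ x, Real.exp (f x) ∂Q)
      ≤ ∫ x, Real.log ((P.rnDeriv Q x).toReal) ∂P := by
  set g : α → ℝ := fun x => (P.rnDeriv Q x).toReal with hg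
  have hgmeas : Measurable g := (Measure.measurable_rnDeriv P Q).ennreal_toReal
  have hg0 : ∀ x, 0 ≤ g x := fun x => ENNReal.toReal_nonneg
  have hfint : Integrable f P :=
    Integrable.mono' (integrable_const C) hf.aestronglyMeasurable (ae_of_all _ hC)
  have hexpint : Integrable (fun x => Real.exp (f x)) Q := by
    refine Integrable.mono' (integrable_const (Real.exp C)) (hf.exp.aestronglyMeasurable)
      (ae_of_all _ fun x => ?_)
    rw [Real.norm_eq_abs, abs_of_nonneg (Real.exp_pos _).le]
    exact Real.exp_le_exp.mpr ((abs_le.mp (hC x)).2)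
  have h1 : ∫ x, f x ∂P = ∫ x, g x • f x ∂Q :=
    (integral_rnDeriv_smul hPQ).symm
  have h2 : ∫ x, Real.log (g x) ∂P = ∫ x, g x • Real.log (g x) ∂Q :=
    (integral_rnDeriv_smul hPQ).symm
  have hgf : Integrable (fun x => g x • f x) Q :=
    (integrable_rnDeriv_smul_iff hPQ).mpr hfint
  have hglog : Integrable (fun x => g x • Real.log (g x)) Q :=
    (integrable_rnDeriv_smul_iff hPQ).mpr hkl
  rw [h1, h2, ← integral_const_mul (rexp 1)⁻¹, ← integral_sub hgf (hexpint.const_mul _)]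
  refine integral_mono (hgf.sub (hexpint.const_mul _)) hglog fun x => ?_
  simp only [smul_eq_mul]
  exact young_aux (g x) (f x) (hg0 x)
end

section
/- For a bounded measurable critic f and probability measures P ≪ Q, define the Gibbs probability measure G by dG = (e^f / E_Q[e^f]) dQ. Then E_P[log(dG/dQ)] = D_KL(P‖Q) − D_KL(P‖G), and in particular E_P[log(dG/dQ)] ≤ D_KL(P‖Q). -/
open MeasureTheory Real

/-- For the Gibbs probability measure `dG = (e^f / E_Q[e^f]) dQ`,
`E_P[log (dG/dQ)] = D_KL(P‖Q) - D_KL(P‖G)`, and so `E_P[log (dG/dQ)] ≤ D_KL(P‖Q)`. -/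
theorem gibbs_measure_dv {α : Type*} [MeasurableSpace α]
    (P Q : Measure α) [IsProbabilityMeasure P] [IsProbabilityMeasure Q]
    (hPQ : P ≪ Q) (f : α → ℝ) (hf : Measurable f) (C : ℝ) (hC : ∀ x, |f x| ≤ C)
    (hkl : Integrable (fun x => Real.log ((P.rnDeriv Q x).toReal)) P)
    (G : Measure α)
    (hG : G = Q.withDensity (fun x => ENNReal.ofReal (Real.exp (f x) / ∫ y, Real.exp (f y) ∂Q))) :
    (∫ x, Real.log ((G.rnDeriv Q x).toReal) ∂P)
        = (∫ x, Real.log ((P.rnDeriv Q x).toReal) ∂P)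
          - (∫ x, Real.log ((P.rnDeriv G x).toReal) ∂P)
    ∧ (∫ x, Real.log ((G.rnDeriv Q x).toReal) ∂P)
        ≤ ∫ x, Real.log ((P.rnDeriv Q x).toReal) ∂P := by
  have hGt : G = Q.tilted f := hG
  subst hGt
  -- integrability facts
  have hexpQ : Integrable (fun x => Real.exp (f x)) Q := by
    refine Integrable.mono' (integrable_const (Real.exp C))
      hf.exp.aestronglyMeasurable (ae_of_all _ fun x => ?_)
    rw [Real.norm_eq_abs, abs_of_pos (Real.exp_pos _)]
    exact Real.exp_le_exp.mpr ((abs_le.mp (hC x)).2)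
  have hfP : Integrable f P := by
    refine Integrable.mono' (integrable_const C) hf.aestronglyMeasurable
      (ae_of_all _ fun x => (Real.norm_eq_abs _).le.trans (hC x))
  have hkl' : Integrable (llr P Q) P := hkl
  -- absolute continuity and probability measure instances
  have hQG : Q ≪ Q.tilted f := absolutelyContinuous_tilted hexpQ
  have hPG : P ≪ Q.tilted f := hPQ.trans hQG
  have : IsProbabilityMeasure (Q.tilted f) := isProbabilityMeasure_tilted hexpQ
  set Z : ℝ := ∫ y, Real.exp (f y) ∂Q with hZ
  -- value of E_P[log dG/dQ]
  have hA : (∫ x, Real.log (((Q.tilted f).rnDeriv Q x).toReal) ∂P)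
      = (∫ x, f x ∂P) - Real.log Z := by
    have h1 : (fun x => Real.log (((Q.tilted f).rnDeriv Q x).toReal))
        =ᵐ[P] fun x => f x - Real.log Z :=
      hPQ.ae_le (log_rnDeriv_tilted_left_self hexpQ)
    rw [integral_congr_ae h1, integral_sub hfP (integrable_const _)]
    simp
  -- value of E_P[log dP/dG]
  have hB : (∫ x, llr P (Q.tilted f) x ∂P)
      = (∫ x, llr P Q x ∂P) - (∫ x, f x ∂P) + Real.log Z :=
    integral_llr_tilted_right hPQ hfP hexpQ hkl'
  have hBint : Integrable (llr P (Q.tilted f)) P :=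
    integrable_llr_tilted_right hPQ hfP hkl' hexpQ
  -- nonnegativity of D_KL(P ‖ G)
  have hnonneg : 0 ≤ ∫ x, llr P (Q.tilted f) x ∂P := by
    have h2 : Integrable (fun x => ((Q.tilted f).rnDeriv P x).toReal) P :=
      Measure.integrable_toReal_rnDeriv
    have h3 : ∀ᵐ x ∂P, 1 - ((Q.tilted f).rnDeriv P x).toReal ≤ llr P (Q.tilted f) x := by
      filter_upwards [Measure.rnDeriv_pos hPG, hPG.ae_le (Measure.rnDeriv_lt_top P _),
        Measure.inv_rnDeriv hPG] with x hpos hlt hinv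
      have hx : ((Q.tilted f).rnDeriv P x).toReal = ((P.rnDeriv (Q.tilted f) x).toReal)⁻¹ := by
        rw [← hinv]
        simp [ENNReal.toReal_inv]
      have ht : 0 < (P.rnDeriv (Q.tilted f) x).toReal :=
        ENNReal.toReal_pos hpos.ne' hlt.ne
      rw [hx]
      exact Real.one_sub_inv_le_log_of_pos ht
    have h4 : ∫ x, (1 - ((Q.tilted f).rnDeriv P x).toReal) ∂P
        ≤ ∫ x, llr P (Q.tilted f) x ∂P :=
      integral_mono_ae ((integrable_const 1).sub h2) hBint h3
    have h5 : ∫ x, ((Q.tilted f).rnDeriv P x).toReal ∂P ≤ 1 := by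
      have := Measure.setIntegral_toReal_rnDeriv_le (μ := Q.tilted f) (ν := P)
        (s := Set.univ) (measure_ne_top _ _)
      simpa using this
    have h6 : 0 ≤ ∫ x, (1 - ((Q.tilted f).rnDeriv P x).toReal) ∂P := by
      rw [integral_sub (integrable_const 1) h2]
      simp only [integral_const, measure_univ, probReal_univ, ENNReal.toReal_one, smul_eq_mul, one_mul]
      linarith
    linarith
  constructor
  · show _ = (∫ x, llr P Q x ∂P) - (∫ x, llr P (Q.tilted f) x ∂P)
    rw [hA, hB]; ring
  · show _ ≤ ∫ x, llr P Q x ∂P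
    rw [hA]
    have := hB
    nlinarith [hnonneg]
end

section
/- SMILE bias bound: for any measurable f and probability measure Q with G := E_Q[e^f] < ∞ and τ > 0, |E_Q[e^f] − E_Q[clip(e^f, e^{-τ}, e^{τ})]| ≤ max(e^{τ} − G·e^{-2τ}, G − e^{-τ}). -/
open MeasureTheory Real

/-- SMILE bias bound: `|E_Q[e^f] - E_Q[clip(e^f, e^{-τ}, e^{τ})]| ≤
max (e^τ - G e^{-2τ}) (G - e^{-τ})` where `G = E_Q[e^f]`. -/
theorem smile_bias_bound {α : Type*} [MeasurableSpace α]
    (Q : Measure α) [IsProbabilityMeasure Q] (f : α → ℝ) (hf : Measurable f)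
    (hint : Integrable (fun x => Real.exp (f x)) Q)
    (τ : ℝ) (hτ : 0 < τ) (G : ℝ) (hG : G = ∫ x, Real.exp (f x) ∂Q) :
    |(∫ x, Real.exp (f x) ∂Q)
        - ∫ x, max (min (Real.exp (f x)) (Real.exp τ)) (Real.exp (-τ)) ∂Q|
      ≤ max (Real.exp τ - G * Real.exp (-2 * τ)) (G - Real.exp (-τ)) := by
  set g : α → ℝ := fun x => max (min (Real.exp (f x)) (Real.exp τ)) (Real.exp (-τ)) with hg
  have hgint : Integrable g Q := by
    exact (hint.inf (integrable_const (Real.exp τ))).sup (integrable_const (Real.exp (-τ)))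
  have hGnn : 0 ≤ G := by
    rw [hG]; exact integral_nonneg fun x => (Real.exp_pos _).le
  have hlow : Real.exp (-τ) ≤ ∫ x, g x ∂Q := by
    calc Real.exp (-τ) = ∫ _x, Real.exp (-τ) ∂Q := by simp
    _ ≤ ∫ x, g x ∂Q :=
      integral_mono (integrable_const _) hgint (fun x => le_max_right _ _)
  have hhigh : (∫ x, g x ∂Q) ≤ Real.exp τ := by
    calc (∫ x, g x ∂Q) ≤ ∫ _x, Real.exp τ ∂Q := by
          refine integral_mono hgint (integrable_const _) (fun x => ?_)
          exact max_le (min_le_right _ _) (Real.exp_le_exp.2 (by linarith))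
    _ = Real.exp τ := by simp
  have hexp2 : Real.exp (-2 * τ) ≤ 1 := Real.exp_le_one_iff.2 (by linarith)
  rw [← hG, abs_sub_le_iff]
  constructor
  · calc G - ∫ x, g x ∂Q ≤ G - Real.exp (-τ) := by linarith
    _ ≤ _ := le_max_right _ _
  · calc (∫ x, g x ∂Q) - G ≤ Real.exp τ - G := by linarith
    _ ≤ Real.exp τ - G * Real.exp (-2 * τ) := by nlinarith
    _ ≤ _ := le_max_left _ _
end
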